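/- Let A ∈ ℂ^{n×n}, B ∈ ℂ^{m×m}, C ∈ ℂ^{n×b}, Z ∈ ℂ^{m×b}. Let V_{h+1} ∈ ℂ^{n×b(h+1)} have orthonormal columns, let V_h consist of its first bh columns and v_{h+1} of its last b columns, and let H̲_h ∈ ℂ^{b(h+1)×bh} and an invertible K_h ∈ ℂ^{bh×bh} satisfy A V_h = V_{h+1} H̲_h K_h^{-1}. Assume furthermore V_h V_h^H C = C. Let Y solve the projected Sylvester equation (V_h^H A V_h)Y + YB − V_h^H C Z^H = 0, and define the residual ρ_h := A V_h Y + V_h Y B − C Z^H. Then ρ_h = v_{h+1} · (e_{h+1}^H H̲_h K_h^{-1} Y), where e_{h+1}^H := [0 ⋯ 0 I_b] ∈ ℂ^{b×b(h+1)} selects the last b rows, and consequently ‖ρ_h‖_F = ‖e_{h+1}^H H̲_h K_h^{-1} Y‖_F. -/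

import Mathlib

open Matrix

/-- The first `bh` columns of `V ∈ ℂ^{n×b(h+1)}` (columns indexed blockwise). -/
def firstCols {n h b : ℕ} (V : Matrix (Fin n) (Fin (h + 1) × Fin b) ℂ) :
    Matrix (Fin n) (Fin h × Fin b) ℂ :=
  Matrix.of fun p q => V p (q.1.castSucc, q.2)

/-- The last `b` columns of `V ∈ ℂ^{n×b(h+1)}`. -/
def lastCols {n h b : ℕ} (V : Matrix (Fin n) (Fin (h + 1) × Fin b) ℂ) :
    Matrix (Fin n) (Fin b) ℂ :=
  Matrix.of fun p l => V p (Fin.last h, l)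

/-- The last `b` rows of `H ∈ ℂ^{b(h+1)×κ}`, i.e. `e_{h+1}ᴴ H`. -/
def lastRows {h b : ℕ} {κ : Type} (H : Matrix (Fin (h + 1) × Fin b) κ ℂ) :
    Matrix (Fin b) κ ℂ :=
  Matrix.of fun l q => H (Fin.last h, l) q

/-- The first `bh` rows of `H ∈ ℂ^{b(h+1)×κ}`. -/
def firstRows {h b : ℕ} {κ : Type} (H : Matrix (Fin (h + 1) × Fin b) κ ℂ) :
    Matrix (Fin h × Fin b) κ ℂ :=
  Matrix.of fun q j => H (q.1.castSucc, q.2) j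

lemma split_mul {n h b : ℕ} {κ : Type} [Fintype κ]
    (P : Matrix (Fin n) (Fin (h + 1) × Fin b) ℂ)
    (M : Matrix (Fin (h + 1) × Fin b) κ ℂ) :
    P * M = firstCols P * firstRows M + lastCols P * lastRows M := by
  ext p j
  simp only [Matrix.mul_apply, Matrix.add_apply, firstCols, firstRows, lastCols, lastRows,
    Matrix.of_apply]
  rw [Fintype.sum_prod_type, Fin.sum_univ_castSucc, Fintype.sum_prod_type]

lemma lastRows_mul {h b : ℕ} {κ κ' : Type} [Fintype κ]
    (H : Matrix (Fin (h + 1) × Fin b) κ ℂ) (M : Matrix κ κ' ℂ) :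
    lastRows (H * M) = lastRows H * M := by
  ext l j
  simp [lastRows, Matrix.mul_apply]

lemma norm_sq_eq_re (z : ℂ) : ‖z‖ ^ 2 = (star z * z).re := by
  have : (star z * z) = (Complex.normSq z : ℂ) := Complex.normSq_eq_conj_mul_self.symm
  rw [this, Complex.ofReal_re, ← Complex.sq_norm]

lemma frob_col {ι κ : Type} [Fintype ι] (X : Matrix ι κ ℂ) (q : κ) :
    ∑ p, ‖X p q‖ ^ 2 = ((Xᴴ * X) q q).re := by
  simp only [Matrix.mul_apply, Matrix.conjTranspose_apply, Complex.re_sum]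
  exact Finset.sum_congr rfl fun p _ => norm_sq_eq_re _

/-- Cheap residual formula: with `V_{h+1}` orthonormal,
`A V_h = V_{h+1} H̲_h K_h⁻¹`, `V_h V_hᴴ C = C`, and `Y` solving the projected
Sylvester equation, the residual `ρ_h = A V_h Y + V_h Y B - C Zᴴ` equals
`v_{h+1} · (e_{h+1}ᴴ H̲_h K_h⁻¹ Y)`, and consequently the Frobenius norms agree:
`‖ρ_h‖_F = ‖e_{h+1}ᴴ H̲_h K_h⁻¹ Y‖_F`. -/
theorem stmt_5 {n m b h : ℕ}
    (A : Matrix (Fin n) (Fin n) ℂ) (B : Matrix (Fin m) (Fin m) ℂ)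
    (Cblk : Matrix (Fin n) (Fin b) ℂ) (Z : Matrix (Fin m) (Fin b) ℂ)
    (V : Matrix (Fin n) (Fin (h + 1) × Fin b) ℂ)
    (hVorth : Vᴴ * V = 1)
    (Hu : Matrix (Fin (h + 1) × Fin b) (Fin h × Fin b) ℂ)
    (K : Matrix (Fin h × Fin b) (Fin h × Fin b) ℂ)
    (hK : IsUnit K)
    (hAV : A * firstCols V = V * Hu * K⁻¹)
    (hC : firstCols V * (firstCols V)ᴴ * Cblk = Cblk)
    (Y : Matrix (Fin h × Fin b) (Fin m) ℂ)
    (hY : ((firstCols V)ᴴ * A * firstCols V) * Y + Y * B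
            - (firstCols V)ᴴ * Cblk * Zᴴ = 0) :
    A * firstCols V * Y + firstCols V * Y * B - Cblk * Zᴴ
      = lastCols V * (lastRows Hu * K⁻¹ * Y)
    ∧ Real.sqrt (∑ p, ∑ q,
        ‖(A * firstCols V * Y + firstCols V * Y * B - Cblk * Zᴴ) p q‖ ^ 2)
      = Real.sqrt (∑ l, ∑ q, ‖(lastRows Hu * K⁻¹ * Y) l q‖ ^ 2) := by
  set Vh := firstCols V with hVh
  set v := lastCols V with hv
  set F := firstRows (Hu * K⁻¹) with hF
  set G := lastRows (Hu * K⁻¹) with hG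
  -- orthogonality relations
  have hVhVh : Vhᴴ * Vh = 1 := by
    ext q q'
    have := congrFun (congrFun hVorth (q.1.castSucc, q.2)) (q'.1.castSucc, q'.2)
    simp only [Matrix.mul_apply, Matrix.conjTranspose_apply, Matrix.one_apply] at this ⊢
    simp only [hVh, firstCols, Matrix.of_apply]
    rw [this]
    by_cases hqq : q = q'
    · simp [hqq]
    · rw [if_neg hqq, if_neg]
      intro hcon
      apply hqq
      obtain ⟨q1, q2⟩ := q; obtain ⟨q1', q2'⟩ := q'
      simp only [Prod.mk.injEq] at hcon
      exact Prod.ext (Fin.castSucc_injective _ hcon.1) hcon.2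
  have hVhv : Vhᴴ * v = 0 := by
    ext q l
    have := congrFun (congrFun hVorth (q.1.castSucc, q.2)) (Fin.last h, l)
    simp only [Matrix.mul_apply, Matrix.conjTranspose_apply, Matrix.one_apply] at this ⊢
    simp only [hVh, hv, firstCols, lastCols, Matrix.of_apply]
    rw [this, if_neg, Matrix.zero_apply]
    intro hcon
    have : q.1.castSucc = Fin.last h := (Prod.mk.injEq _ _ _ _ ▸ hcon).1
    exact absurd this (Fin.castSucc_lt_last q.1).ne
  have hvv : vᴴ * v = 1 := by
    ext l l'
    have := congrFun (congrFun hVorth (Fin.last h, l)) (Fin.last h, l')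
    simp only [Matrix.mul_apply, Matrix.conjTranspose_apply, Matrix.one_apply] at this ⊢
    simp only [hv, lastCols, Matrix.of_apply]
    rw [this]
    by_cases hll : l = l'
    · simp [hll]
    · rw [if_neg hll, if_neg]
      intro hcon
      exact hll (Prod.mk.injEq _ _ _ _ ▸ hcon).2
  -- split A Vh
  have hAV' : A * Vh = Vh * F + v * G := by
    rw [hAV, Matrix.mul_assoc, split_mul, ← hF, ← hG]
  have hGK : G = lastRows Hu * K⁻¹ := lastRows_mul Hu K⁻¹
  -- projected matrix
  have hproj : Vhᴴ * A * Vh = F := by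
    rw [Matrix.mul_assoc, hAV', Matrix.mul_add, ← Matrix.mul_assoc, ← Matrix.mul_assoc,
      hVhVh, hVhv, Matrix.one_mul, Matrix.zero_mul, add_zero]
  have hY' : F * Y + Y * B = Vhᴴ * Cblk * Zᴴ := by
    have := sub_eq_zero.mp hY
    rwa [hproj] at this
  -- residual formula
  have hres : A * Vh * Y + Vh * Y * B - Cblk * Zᴴ = v * (G * Y) := by
    have : A * Vh * Y + Vh * Y * B
        = Vh * (F * Y + Y * B) + v * (G * Y) := by
      rw [hAV', Matrix.add_mul, Matrix.mul_add, Matrix.mul_assoc Vh F Y,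
        Matrix.mul_assoc Vh Y B, Matrix.mul_assoc v G Y]
      abel
    rw [this, hY', ← Matrix.mul_assoc, ← Matrix.mul_assoc, hC]
    abel
  refine ⟨by rw [hres, hGK, Matrix.mul_assoc], ?_⟩
  rw [hres, ← hGK]
  congr 1
  -- Frobenius norm preserved
  have hMM : (v * (G * Y))ᴴ * (v * (G * Y)) = (G * Y)ᴴ * (G * Y) := by
    rw [Matrix.conjTranspose_mul, Matrix.mul_assoc, ← Matrix.mul_assoc vᴴ v (G * Y),
      hvv, Matrix.one_mul]
  rw [Finset.sum_comm, Finset.sum_comm (γ := Fin b)]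
  refine Finset.sum_congr rfl fun q _ => ?_
  rw [frob_col, frob_col, hMM]
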